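/- Let E be a finite ground set, M ⊆ 2^E a downward-closed family of feasible sets, and (B_1,…,B_T) a fixed ordered partition of E into batches. Suppose the weight vectors w^1,…,w^T of the batches are mutually independent, each w^t drawn from a finitely supported distribution D_t on ℝ^{B_t}, and let OPT(w) be a fixed (deterministic) maximizer of the total weight w(S)=∑_{e∈S} w_e over S ∈ M. Define the sampling scheme R = (R_1,…,R_T) by: independently for each t, draw fresh weights ŵ^{(t)} ~ ∏_{s≠t} D_s and set R_t = B_t ∩ OPT(w^t, ŵ^{(t)}). THEOREM (reduction from batched prophet inequality to batched OCRS): if ALG is a c-selectable batched OCRS with respect to this sampling scheme, then the online algorithm that at each time t observes w^t, draws ŵ^{(t)} ~ ∏_{s≠t} D_s, computes R_t = B_t ∩ OPT(w^t, ŵ^{(t)}), and feeds R_t to ALG to obtain I_t ⊆ R_t, outputs a feasible set I = ⊔_{t∈[T]} I_t satisfying E[w(I)] ≥ c · E[w(OPT(w))]. -/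

import Mathlib

open Finset

open Classical in
/-- Probability of the event `P` under the (finitely supported) mass function `mass`. -/
noncomputable def prOf {Ω : Type*} [Fintype Ω] (mass : Ω → ℝ) (P : Ω → Prop) : ℝ :=
  ∑ ω, if P ω then mass ω else 0

/-- Expectation of `f` under the (finitely supported) mass function `mass`. -/
noncomputable def expOf {Ω : Type*} [Fintype Ω] (mass : Ω → ℝ) (f : Ω → ℝ) : ℝ :=
  ∑ ω, mass ω * f ω

open Classical in
lemma pi_sum_prod_one {ι : Type*} [Fintype ι] [DecidableEq ι] {β : ι → Type*}
    [∀ i, Fintype (β i)] (p : ∀ i, β i → ℝ) (hp : ∀ i, ∑ a, p i a = 1) :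
    ∑ b : ∀ i, β i, ∏ i, p i (b i) = 1 := by
  rw [← Fintype.prod_sum p]
  simp [hp]

open Classical in
lemma sum_pi_weighted {ι : Type*} [Fintype ι] [DecidableEq ι] {β : ι → Type*}
    [∀ i, Fintype (β i)] (p : ∀ i, β i → ℝ) (t : ι) (hp : ∑ a, p t a = 1)
    (g : β t → (∀ i, β i) → ℝ)
    (hg : ∀ a b a', g a (Function.update b t a') = g a b) :
    ∑ b : ∀ i, β i, (∏ i, p i (b i)) * g (b t) b
      = ∑ a, p t a * ∑ b : ∀ i, β i, (∏ i, p i (b i)) * g a b := by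
  set q : β t → (∀ i, β i) → ℝ := fun a b => (∏ i ∈ univ.erase t, p i (b i)) * g a b with hqdef
  have hq : ∀ a b a', q a (Function.update b t a') = q a b := by
    intro a b a'
    simp only [hqdef]
    rw [hg]
    congr 1
    refine Finset.prod_congr rfl fun i hi => ?_
    rw [Function.update_of_ne (Finset.ne_of_mem_erase hi)]
  have hsplit : ∀ b : ∀ i, β i, (∏ i, p i (b i)) = p t (b t) * ∏ i ∈ univ.erase t, p i (b i) :=
    fun b => (Finset.mul_prod_erase univ _ (mem_univ t)).symm
  have hfiber : ∀ (a a1 a2 : β t),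
      ∑ b ∈ univ.filter (fun b : ∀ i, β i => b t = a1), q a b
        = ∑ b ∈ univ.filter (fun b : ∀ i, β i => b t = a2), q a b := by
    intro a a1 a2
    refine Finset.sum_bij' (fun b _ => Function.update b t a2)
      (fun b _ => Function.update b t a1) ?_ ?_ ?_ ?_ ?_
    · intro b hb; simp [Function.update_self]
    · intro b hb; simp [Function.update_self]
    · intro b hb
      simp only [mem_filter, mem_univ, true_and] at hb
      show Function.update (Function.update b t a2) t a1 = b
      rw [Function.update_idem, ← hb, Function.update_eq_self]
    · intro b hb
      simp only [mem_filter, mem_univ, true_and] at hb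
      show Function.update (Function.update b t a1) t a2 = b
      rw [Function.update_idem, ← hb, Function.update_eq_self]
    · intro b hb; exact (hq a b a2).symm
  have key : ∀ a : β t, ∑ b : ∀ i, β i, (∏ i, p i (b i)) * g a b
      = ∑ b ∈ univ.filter (fun b : ∀ i, β i => b t = a), q a b := by
    intro a
    calc ∑ b : ∀ i, β i, (∏ i, p i (b i)) * g a b
        = ∑ b : ∀ i, β i, p t (b t) * q a b := by
          refine Finset.sum_congr rfl fun b _ => ?_
          rw [hsplit b]; simp only [hqdef]; ring
      _ = ∑ a', ∑ b ∈ univ.filter (fun b : ∀ i, β i => b t = a'), p t (b t) * q a b := by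
          rw [Finset.sum_fiberwise univ (fun b : ∀ i, β i => b t) (fun b => p t (b t) * q a b)]
      _ = ∑ a', p t a' * ∑ b ∈ univ.filter (fun b : ∀ i, β i => b t = a'), q a b := by
          refine Finset.sum_congr rfl fun a' _ => ?_
          rw [Finset.mul_sum]
          refine Finset.sum_congr rfl fun b hb => ?_
          simp only [mem_filter, mem_univ, true_and] at hb
          rw [hb]
      _ = ∑ a', p t a' * ∑ b ∈ univ.filter (fun b : ∀ i, β i => b t = a), q a b :=
          Finset.sum_congr rfl fun a' _ => by rw [hfiber a a' a]
      _ = (∑ a', p t a') * ∑ b ∈ univ.filter (fun b : ∀ i, β i => b t = a), q a b := by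
          rw [Finset.sum_mul]
      _ = ∑ b ∈ univ.filter (fun b : ∀ i, β i => b t = a), q a b := by rw [hp, one_mul]
  calc ∑ b : ∀ i, β i, (∏ i, p i (b i)) * g (b t) b
      = ∑ b : ∀ i, β i, p t (b t) * q (b t) b := by
        refine Finset.sum_congr rfl fun b _ => ?_
        rw [hsplit b]; simp only [hqdef]; ring
    _ = ∑ a, ∑ b ∈ univ.filter (fun b : ∀ i, β i => b t = a), p t (b t) * q (b t) b := by
        rw [Finset.sum_fiberwise univ (fun b : ∀ i, β i => b t) (fun b => p t (b t) * q (b t) b)]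
    _ = ∑ a, p t a * ∑ b ∈ univ.filter (fun b : ∀ i, β i => b t = a), q a b := by
        refine Finset.sum_congr rfl fun a _ => ?_
        rw [Finset.mul_sum]
        refine Finset.sum_congr rfl fun b hb => ?_
        simp only [mem_filter, mem_univ, true_and] at hb
        rw [hb]
    _ = ∑ a, p t a * ∑ b : ∀ i, β i, (∏ i, p i (b i)) * g a b :=
        Finset.sum_congr rfl fun a _ => by rw [key a]

open Classical in
/-- Reduction from batched prophet inequality to batched OCRS (Theorem 2.3 in the paper).

Setting: `E` is a finite ground set, `M` a downward-closed family of feasible subsets,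
`B 0, …, B (T-1)` an ordered partition of `E` into batches.  The weight vectors of the
batches are mutually independent: the weights of batch `t` are `wt t o` for a sample
`o : Ωt t` drawn with probability `μ t o`.  `OPT` is a fixed deterministic maximizer of
total weight over `M`.

The sample space is `(∀ t, Ωt t) × (∀ t s, Ωt s) × Θ`: the first component carries the
actual weights `w`, the second the fresh resampled weights `ŵ^{(t)}` used to define the
sampling scheme `R ω t = B t ∩ OPT(w^t, ŵ^{(t)})`, and `Θ` (with mass `ν`) is the internal
randomness of the online selection algorithm `alg`, which at time `t` sees only
`R ω 1, …, R ω t` (hypothesis `halgOnline`), selects `I_t ⊆ R_t` (hypothesis `hsub`) so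
that `⊔_t I_t ∈ M` always (hypothesis `hfeas`), and is `c`-selectable:
`P(e ∈ I_t ∧ R_t = S) ≥ c · P(R_t = S)` for all `t`, `S ⊆ B t`, `e ∈ S` (hypothesis
`hsel`).

Conclusion: the composed online algorithm outputs a feasible set `I = ⊔_t I_t` with
`E[w(I)] ≥ c · E[w(OPT(w))]`. -/
theorem batched_prophet_inequality_from_batched_OCRS
    {E : Type*} [Fintype E] [DecidableEq E] {T : ℕ}
    (M : Set (Finset E))
    (hM : ∀ S ∈ M, ∀ S' ⊆ S, S' ∈ M)
    (B : Fin T → Finset E)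
    (hB : ∀ e : E, ∃! t : Fin T, e ∈ B t)
    (Ωt : Fin T → Type) [∀ t, Fintype (Ωt t)]
    (μ : ∀ t, Ωt t → ℝ)
    (hμ0 : ∀ t o, 0 ≤ μ t o) (hμ1 : ∀ t, ∑ o, μ t o = 1)
    (wt : ∀ t, Ωt t → E → ℝ)
    (OPT : (E → ℝ) → Finset E)
    (hOPTmem : ∀ w, OPT w ∈ M)
    (hOPTmax : ∀ w : E → ℝ, ∀ S ∈ M, ∑ e ∈ S, w e ≤ ∑ e ∈ OPT w, w e)
    (Θ : Type) [Fintype Θ]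
    (ν : Θ → ℝ) (hν0 : ∀ θ, 0 ≤ ν θ) (hν1 : ∑ θ, ν θ = 1)
    (alg : Θ → (Fin T → Finset E) → Fin T → Finset E)
    (halgOnline : ∀ θ r r' (t : Fin T), (∀ s ≤ t, r s = r' s) → alg θ r t = alg θ r' t)
    (c : ℝ)
    -- the actual weight vector, as a function of the batch randomness
    (w : (∀ t, Ωt t) → E → ℝ)
    (hw : ∀ ω e, w ω e = ∑ t, if e ∈ B t then wt t (ω t) e else 0)
    -- the sampling scheme `R`, using fresh resampled weights for the other batches
    (R : ((∀ t, Ωt t) × (∀ _ : Fin T, ∀ s, Ωt s) × Θ) → Fin T → Finset E)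
    (hR : ∀ ω t, R ω t = B t ∩ OPT (fun e =>
      ∑ s, if e ∈ B s then (if s = t then wt s (ω.1 s) e else wt s (ω.2.1 t s) e) else 0))
    -- the joint mass of actual weights, resampled weights, and internal randomness
    (mass : ((∀ t, Ωt t) × (∀ _ : Fin T, ∀ s, Ωt s) × Θ) → ℝ)
    (hmass : ∀ ω, mass ω =
      (∏ t, μ t (ω.1 t)) * (∏ t, ∏ s, μ s (ω.2.1 t s)) * ν ω.2.2)
    -- `alg` is a batched OCRS with respect to the sampling scheme `R`
    (hsub : ∀ ω t, alg ω.2.2 (R ω) t ⊆ R ω t)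
    (hfeas : ∀ ω, (Finset.univ.biUnion fun t => alg ω.2.2 (R ω) t) ∈ M)
    -- `alg` is `c`-selectable
    (hsel : ∀ (t : Fin T) (S : Finset E), S ⊆ B t → ∀ e ∈ S,
      prOf mass (fun ω => e ∈ alg ω.2.2 (R ω) t ∧ R ω t = S) ≥
        c * prOf mass (fun ω => R ω t = S)) :
    (∀ ω, (Finset.univ.biUnion fun t => alg ω.2.2 (R ω) t) ∈ M) ∧
    expOf mass
        (fun ω => ∑ e ∈ Finset.univ.biUnion (fun t => alg ω.2.2 (R ω) t), w ω.1 e)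
      ≥ c * expOf mass (fun ω => ∑ e ∈ OPT (w ω.1), w ω.1 e) := by
  refine ⟨hfeas, ?_⟩
  -- local definitions
  set m1 : (∀ s, Ωt s) → ℝ := fun x => ∏ s, μ s (x s) with hm1def
  set m2 : (∀ _ : Fin T, ∀ s, Ωt s) → ℝ := fun y => ∏ u, m1 (y u) with hm2def
  set W : (∀ s, Ωt s) → E → ℝ := fun x e => ∑ s, if e ∈ B s then wt s (x s) e else 0 with hWdef
  set ρ : ∀ t : Fin T, Ωt t → (∀ s, Ωt s) → Finset E :=
    fun t a b => B t ∩ OPT (W (Function.update b t a)) with hρdef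
  -- basic facts
  have hBuniq : ∀ {e : E} {t s : Fin T}, e ∈ B t → e ∈ B s → s = t := by
    intro e t s ht hs
    obtain ⟨u, -, hu⟩ := hB e
    rw [hu s hs, hu t ht]
  have hm1nn : ∀ x, 0 ≤ m1 x := fun x => Finset.prod_nonneg fun s _ => hμ0 s (x s)
  have hm2nn : ∀ y, 0 ≤ m2 y := fun y => Finset.prod_nonneg fun u _ => hm1nn (y u)
  have hm1sum : ∑ x : ∀ s, Ωt s, m1 x = 1 := pi_sum_prod_one μ hμ1
  have hm2sum : ∑ y : ∀ _ : Fin T, ∀ s, Ωt s, m2 y = 1 :=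
    pi_sum_prod_one (fun _ b => m1 b) (fun _ => hm1sum)
  have hOPTnn : ∀ v : E → ℝ, ∀ e ∈ OPT v, 0 ≤ v e := by
    intro v e he
    have h1 : (OPT v).erase e ∈ M := hM _ (hOPTmem v) _ (Finset.erase_subset e (OPT v))
    have h2 := hOPTmax v _ h1
    have h3 : ∑ x ∈ (OPT v).erase e, v x + v e = ∑ x ∈ OPT v, v x :=
      Finset.sum_erase_add _ _ he
    linarith
  have hWe : ∀ (x : ∀ s, Ωt s) (t : Fin T) (e : E), e ∈ B t → W x e = wt t (x t) e := by
    intro x t e he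
    rw [hWdef]
    refine (Finset.sum_eq_single t (fun s _ hs => ?_) (fun h => absurd (mem_univ t) h)).trans
      (if_pos he)
    exact if_neg (fun hes => hs (hBuniq he hes))
  have hR2 : ∀ ω s, R ω s = ρ s (ω.1 s) (ω.2.1 s) := by
    intro ω s
    rw [hR ω s, hρdef]
    congr 2
    funext e
    rw [hWdef]
    refine Finset.sum_congr rfl fun u _ => ?_
    by_cases hu : u = s
    · subst hu; simp [Function.update_self]
    · simp [hu, Function.update_of_ne hu]
  have hρinv : ∀ (t : Fin T) a b a', ρ t a (Function.update b t a') = ρ t a b := by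
    intro t a b a'
    rw [hρdef]
    simp only [Function.update_idem]
  have hρsub : ∀ (t : Fin T) a b, ρ t a b ⊆ B t := fun t a b => by
    rw [hρdef]; exact Finset.inter_subset_left
  -- expectation expansion over the product space
  have hexpand : ∀ H : ((∀ t, Ωt t) × (∀ _ : Fin T, ∀ s, Ωt s) × Θ) → ℝ,
      ∑ ω, mass ω * H ω
        = ∑ x, ∑ y, ∑ θ, (m1 x * m2 y * ν θ) * H (x, y, θ) := by
    intro H
    rw [Fintype.sum_prod_type]
    refine Finset.sum_congr rfl fun x _ => ?_
    rw [Fintype.sum_prod_type]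
    refine Finset.sum_congr rfl fun y _ => ?_
    refine Finset.sum_congr rfl fun θ _ => ?_
    rw [hmass]
  have hmarg : ∀ f : (∀ s, Ωt s) → ℝ, ∑ ω, mass ω * f ω.1 = ∑ x, m1 x * f x := by
    intro f
    rw [hexpand (fun ω => f ω.1)]
    refine Finset.sum_congr rfl fun x _ => ?_
    calc ∑ y, ∑ θ, (m1 x * m2 y * ν θ) * f x
        = ∑ y, m2 y * ((∑ θ, ν θ) * (m1 x * f x)) := by
          refine Finset.sum_congr rfl fun y _ => ?_
          rw [Finset.sum_mul, Finset.mul_sum]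
          exact Finset.sum_congr rfl fun θ _ => by ring
      _ = (∑ y, m2 y) * ((∑ θ, ν θ) * (m1 x * f x)) := (Finset.sum_mul _ _ _).symm
      _ = m1 x * f x := by rw [hm2sum, hν1]; ring
  have hmass1 : ∑ ω, mass ω = 1 := by
    have := hmarg (fun _ => 1)
    simpa [hm1sum] using this
  -- the big factorization lemma
  have hstar : ∀ (t : Fin T) (F : Ωt t → (∀ s, Ωt s) → ℝ)
      (G : ((∀ t, Ωt t) × (∀ _ : Fin T, ∀ s, Ωt s) × Θ) → ℝ),
      (∀ x y θ a, G (Function.update x t a, y, θ) = G (x, y, θ)) →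
      (∀ x y θ b, G (x, Function.update y t b, θ) = G (x, y, θ)) →
      ∑ ω, mass ω * (F (ω.1 t) (ω.2.1 t) * G ω)
        = (∑ a, ∑ b, (μ t a * m1 b) * F a b) * ∑ ω, mass ω * G ω := by
    intro t F G hG1 hG2
    set G3 : (∀ s, Ωt s) → (∀ _ : Fin T, ∀ s, Ωt s) → ℝ :=
      fun x y => ∑ θ, ν θ * G (x, y, θ) with hG3def
    set G4 : (∀ s, Ωt s) → ℝ := fun x => ∑ y, m2 y * G3 x y with hG4def
    have hG3inv2 : ∀ x y b, G3 x (Function.update y t b) = G3 x y := by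
      intro x y b
      rw [hG3def]
      exact Finset.sum_congr rfl fun θ _ => by rw [hG2]
    have hG4inv : ∀ x a, G4 (Function.update x t a) = G4 x := by
      intro x a
      rw [hG4def]
      refine Finset.sum_congr rfl fun y _ => ?_
      congr 1
      rw [hG3def]
      exact Finset.sum_congr rfl fun θ _ => by rw [hG1]
    have hpull : ∀ (K : ℝ) (x : ∀ s, Ωt s), ∑ y, m2 y * (K * G3 x y) = K * G4 x := by
      intro K x
      rw [hG4def, Finset.mul_sum]
      exact Finset.sum_congr rfl fun y _ => by ring
    -- step over y
    have hy : ∀ x : ∀ s, Ωt s,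
        ∑ y, m2 y * (F (x t) (y t) * G3 x y) = (∑ b, m1 b * F (x t) b) * G4 x := by
      intro x
      have h := sum_pi_weighted (β := fun _ : Fin T => ∀ s, Ωt s) (fun _ b => m1 b) t
        (hm1sum) (fun bt y => F (x t) bt * G3 x y)
        (fun a y b => by
          show F (x t) a * G3 x (Function.update y t b) = F (x t) a * G3 x y
          rw [hG3inv2])
      calc ∑ y, m2 y * (F (x t) (y t) * G3 x y)
          = ∑ b, m1 b * ∑ y, m2 y * (F (x t) b * G3 x y) := h
        _ = ∑ b, m1 b * (F (x t) b * G4 x) :=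
            Finset.sum_congr rfl fun b _ => by rw [hpull]
        _ = (∑ b, m1 b * F (x t) b) * G4 x := by
            rw [Finset.sum_mul]
            exact Finset.sum_congr rfl fun b _ => by ring
    -- step over x
    have hx : ∑ x, m1 x * ((∑ b, m1 b * F (x t) b) * G4 x)
        = ∑ a, μ t a * ∑ x, m1 x * ((∑ b, m1 b * F a b) * G4 x) :=
      sum_pi_weighted μ t (hμ1 t) (fun a x => (∑ b, m1 b * F a b) * G4 x)
        (fun a x a' => by
          show (∑ b, m1 b * F a b) * G4 (Function.update x t a')
            = (∑ b, m1 b * F a b) * G4 x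
          rw [hG4inv])
    have hGsum : ∑ ω, mass ω * G ω = ∑ x, m1 x * G4 x := by
      rw [hexpand G]
      refine Finset.sum_congr rfl fun x _ => ?_
      simp only [hG4def, hG3def, Finset.mul_sum]
      exact Finset.sum_congr rfl fun y _ => Finset.sum_congr rfl fun θ _ => by ring
    calc ∑ ω, mass ω * (F (ω.1 t) (ω.2.1 t) * G ω)
        = ∑ x, ∑ y, ∑ θ, (m1 x * m2 y * ν θ) * (F (x t) (y t) * G (x, y, θ)) :=
          hexpand _
      _ = ∑ x, m1 x * ∑ y, m2 y * (F (x t) (y t) * G3 x y) := by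
          refine Finset.sum_congr rfl fun x _ => ?_
          rw [Finset.mul_sum]
          refine Finset.sum_congr rfl fun y _ => ?_
          rw [hG3def]
          rw [show m2 y * (F (x t) (y t) * ∑ θ, ν θ * G (x, y, θ))
            = ∑ θ, m2 y * F (x t) (y t) * (ν θ * G (x, y, θ)) by
              rw [Finset.mul_sum, Finset.mul_sum]
              exact Finset.sum_congr rfl fun θ _ => by ring]
          rw [show m1 x * ∑ θ, m2 y * F (x t) (y t) * (ν θ * G (x, y, θ))
            = ∑ θ, m1 x * (m2 y * F (x t) (y t) * (ν θ * G (x, y, θ))) from Finset.mul_sum ..]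
          exact Finset.sum_congr rfl fun θ _ => by ring
      _ = ∑ x, m1 x * ((∑ b, m1 b * F (x t) b) * G4 x) :=
          Finset.sum_congr rfl fun x _ => by rw [hy]
      _ = ∑ a, μ t a * ∑ x, m1 x * ((∑ b, m1 b * F a b) * G4 x) := hx
      _ = ∑ a, μ t a * ((∑ b, m1 b * F a b) * ∑ x, m1 x * G4 x) := by
          refine Finset.sum_congr rfl fun a _ => ?_
          congr 1
          rw [Finset.mul_sum]
          exact Finset.sum_congr rfl fun x _ => by ring
      _ = (∑ a, ∑ b, (μ t a * m1 b) * F a b) * ∑ x, m1 x * G4 x := by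
          rw [Finset.sum_mul]
          refine Finset.sum_congr rfl fun a _ => ?_
          rw [show (∑ b, (μ t a * m1 b) * F a b) = μ t a * ∑ b, m1 b * F a b by
            rw [Finset.mul_sum]; exact Finset.sum_congr rfl fun b _ => by ring]
          ring
      _ = (∑ a, ∑ b, (μ t a * m1 b) * F a b) * ∑ ω, mass ω * G ω := by rw [hGsum]
  -- rewrite w as W, partition facts
  have hwW : ∀ x : ∀ s, Ωt s, w x = W x := by
    intro x; funext e; rw [hw, hWdef]
  have hunivB : univ.biUnion B = univ := by
    ext e
    simp only [mem_biUnion, mem_univ, iff_true, true_and]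
    obtain ⟨t, ht, -⟩ := hB e
    exact ⟨t, ht⟩
  have hBdisj : ((univ : Finset (Fin T)) : Set (Fin T)).PairwiseDisjoint B := by
    intro t1 _ t2 _ hne
    simp only [Function.onFun]
    rw [Finset.disjoint_left]
    intro e h1 h2
    exact hne (hBuniq h1 h2).symm
  have hpart : ∀ (f : E → ℝ) (C : Finset E),
      ∑ e ∈ C, f e = ∑ t, ∑ e ∈ B t, (if e ∈ C then f e else 0) := by
    intro f C
    have h1 : ∑ e ∈ C, f e = ∑ e ∈ univ, if e ∈ C then f e else 0 := by
      rw [Finset.sum_ite_mem, Finset.univ_inter]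
    rw [h1, ← hunivB, Finset.sum_biUnion hBdisj]
  have hRsub : ∀ ω u, R ω u ⊆ B u := by
    intro ω u; rw [hR]; exact Finset.inter_subset_left
  have hIiff : ∀ ω (t : Fin T) (e : E), e ∈ B t →
      ((e ∈ univ.biUnion fun u => alg ω.2.2 (R ω) u) ↔ e ∈ alg ω.2.2 (R ω) t) := by
    intro ω t e he
    simp only [mem_biUnion, mem_univ, true_and]
    constructor
    · rintro ⟨u, hu⟩
      have heu : e ∈ B u := hRsub ω u (hsub ω u hu)
      have hut : u = t := hBuniq he heu
      rwa [hut] at hu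
    · exact fun h => ⟨t, h⟩
  -- decompose the two expectations
  have hALG : expOf mass (fun ω => ∑ e ∈ univ.biUnion (fun t => alg ω.2.2 (R ω) t), w ω.1 e)
      = ∑ t, ∑ e ∈ B t, ∑ ω, mass ω *
          (if e ∈ alg ω.2.2 (R ω) t then wt t (ω.1 t) e else 0) := by
    rw [expOf]
    calc ∑ ω, mass ω * ∑ e ∈ univ.biUnion (fun t => alg ω.2.2 (R ω) t), w ω.1 e
        = ∑ ω, ∑ t, ∑ e ∈ B t, mass ω *
            (if e ∈ alg ω.2.2 (R ω) t then wt t (ω.1 t) e else 0) := by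
          refine Finset.sum_congr rfl fun ω _ => ?_
          rw [hpart (w ω.1) _, Finset.mul_sum]
          refine Finset.sum_congr rfl fun t _ => ?_
          rw [Finset.mul_sum]
          refine Finset.sum_congr rfl fun e he => ?_
          congr 1
          by_cases hI : e ∈ alg ω.2.2 (R ω) t
          · rw [if_pos ((hIiff ω t e he).mpr hI), if_pos hI, hwW, hWe _ t e he]
          · rw [if_neg (fun hmem => hI ((hIiff ω t e he).mp hmem)), if_neg hI]
      _ = ∑ t, ∑ ω, ∑ e ∈ B t, mass ω *
            (if e ∈ alg ω.2.2 (R ω) t then wt t (ω.1 t) e else 0) := Finset.sum_comm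
      _ = ∑ t, ∑ e ∈ B t, ∑ ω, mass ω *
            (if e ∈ alg ω.2.2 (R ω) t then wt t (ω.1 t) e else 0) :=
          Finset.sum_congr rfl fun t _ => Finset.sum_comm
  have hOPTexp : expOf mass (fun ω => ∑ e ∈ OPT (w ω.1), w ω.1 e)
      = ∑ t, ∑ e ∈ B t, ∑ ω, mass ω *
          (if e ∈ OPT (W ω.1) then wt t (ω.1 t) e else 0) := by
    rw [expOf]
    calc ∑ ω, mass ω * ∑ e ∈ OPT (w ω.1), w ω.1 e
        = ∑ ω, ∑ t, ∑ e ∈ B t, mass ω *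
            (if e ∈ OPT (W ω.1) then wt t (ω.1 t) e else 0) := by
          refine Finset.sum_congr rfl fun ω _ => ?_
          rw [hwW, hpart (W ω.1) _, Finset.mul_sum]
          refine Finset.sum_congr rfl fun t _ => ?_
          rw [Finset.mul_sum]
          refine Finset.sum_congr rfl fun e he => ?_
          congr 1
          by_cases hI : e ∈ OPT (W ω.1)
          · rw [if_pos hI, if_pos hI, hWe _ t e he]
          · rw [if_neg hI, if_neg hI]
      _ = ∑ t, ∑ ω, ∑ e ∈ B t, mass ω *
            (if e ∈ OPT (W ω.1) then wt t (ω.1 t) e else 0) := Finset.sum_comm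
      _ = ∑ t, ∑ e ∈ B t, ∑ ω, mass ω *
            (if e ∈ OPT (W ω.1) then wt t (ω.1 t) e else 0) :=
          Finset.sum_congr rfl fun t _ => Finset.sum_comm
  rw [ge_iff_le, hALG, hOPTexp, Finset.mul_sum]
  refine Finset.sum_le_sum fun t _ => ?_
  rw [Finset.mul_sum]
  refine Finset.sum_le_sum fun e he => ?_
  -- the per-(t,e) inequality
  set A : Finset E → ℝ := fun S => ∑ a, ∑ b, (μ t a * m1 b) *
    (if e ∈ S ∧ ρ t a b = S then wt t a e else 0) with hAdef
  set p : Finset E → ℝ := fun S => ∑ a, ∑ b, (μ t a * m1 b) *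
    (if ρ t a b = S then (1:ℝ) else 0) with hpdef
  set Q : Finset E → ℝ := fun S => ∑ ω, mass ω *
    (if e ∈ alg ω.2.2 (Function.update (R ω) t S) t then (1:ℝ) else 0) with hQdef
  have hRinv1 : ∀ x y θ (a : Ωt t) (s : Fin T), s ≠ t →
      R (Function.update x t a, y, θ) s = R (x, y, θ) s := by
    intro x y θ a s hs
    rw [hR2 (Function.update x t a, y, θ) s, hR2 (x, y, θ) s]
    show ρ s (Function.update x t a s) (y s) = ρ s (x s) (y s)
    rw [Function.update_of_ne hs]
  have hRinv2 : ∀ x y θ (b : ∀ s, Ωt s) (s : Fin T), s ≠ t →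
      R (x, Function.update y t b, θ) s = R (x, y, θ) s := by
    intro x y θ b s hs
    rw [hR2 (x, Function.update y t b, θ) s, hR2 (x, y, θ) s]
    show ρ s (x s) (Function.update y t b s) = ρ s (x s) (y s)
    rw [Function.update_of_ne hs]
  have hupd1 : ∀ (S : Finset E) x y θ (a : Ωt t),
      Function.update (R (Function.update x t a, y, θ)) t S
        = Function.update (R (x, y, θ)) t S := by
    intro S x y θ a
    funext s
    by_cases hs : s = t
    · subst hs; rw [Function.update_self, Function.update_self]
    · rw [Function.update_of_ne hs, Function.update_of_ne hs, hRinv1 x y θ a s hs]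
  have hupd2 : ∀ (S : Finset E) x y θ (b : ∀ s, Ωt s),
      Function.update (R (x, Function.update y t b, θ)) t S
        = Function.update (R (x, y, θ)) t S := by
    intro S x y θ b
    funext s
    by_cases hs : s = t
    · subst hs; rw [Function.update_self, Function.update_self]
    · rw [Function.update_of_ne hs, Function.update_of_ne hs, hRinv2 x y θ b s hs]
  -- factorization of the selected-sum
  have hfac : ∀ S : Finset E,
      (∑ ω, mass ω * (if e ∈ alg ω.2.2 (R ω) t ∧ R ω t = S then wt t (ω.1 t) e else 0))
        = A S * Q S := by
    intro S
    have hpt : ∀ ω, (if e ∈ alg ω.2.2 (R ω) t ∧ R ω t = S then wt t (ω.1 t) e else 0)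
        = (if e ∈ S ∧ ρ t (ω.1 t) (ω.2.1 t) = S then wt t (ω.1 t) e else 0)
          * (if e ∈ alg ω.2.2 (Function.update (R ω) t S) t then (1:ℝ) else 0) := by
      intro ω
      by_cases hRS : R ω t = S
      · have hupd : Function.update (R ω) t S = R ω := by
          rw [← hRS, Function.update_eq_self]
        rw [hupd]
        have hρS : ρ t (ω.1 t) (ω.2.1 t) = S := by rw [← hR2, hRS]
        by_cases halg : e ∈ alg ω.2.2 (R ω) t
        · have heS : e ∈ S := hRS ▸ hsub ω t halg
          rw [if_pos ⟨halg, hRS⟩, if_pos ⟨heS, hρS⟩, if_pos halg, mul_one]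
        · rw [if_neg (fun h => halg h.1), if_neg halg, mul_zero]
      · have hρS : ¬ (ρ t (ω.1 t) (ω.2.1 t) = S) := by rw [← hR2]; exact hRS
        rw [if_neg (fun h => hRS h.2), if_neg (fun h => hρS h.2), zero_mul]
    calc (∑ ω, mass ω * (if e ∈ alg ω.2.2 (R ω) t ∧ R ω t = S then wt t (ω.1 t) e else 0))
        = ∑ ω, mass ω *
            ((fun (a : Ωt t) (b : ∀ s, Ωt s) =>
                if e ∈ S ∧ ρ t a b = S then wt t a e else 0) (ω.1 t) (ω.2.1 t)
              * (fun ω => if e ∈ alg ω.2.2 (Function.update (R ω) t S) t then (1:ℝ) else 0) ω) :=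
          Finset.sum_congr rfl fun ω _ => by rw [hpt ω]
      _ = A S * Q S := by
          refine (hstar t
            (fun a b => if e ∈ S ∧ ρ t a b = S then wt t a e else 0)
            (fun ω => if e ∈ alg ω.2.2 (Function.update (R ω) t S) t then (1:ℝ) else 0)
            ?_ ?_).trans ?_
          · intro x y θ a
            show (if e ∈ alg θ (Function.update (R (Function.update x t a, y, θ)) t S) t
                then (1:ℝ) else 0) = _
            rw [hupd1 S x y θ a]
          · intro x y θ b
            show (if e ∈ alg θ (Function.update (R (x, Function.update y t b, θ)) t S) t
                then (1:ℝ) else 0) = _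
            rw [hupd2 S x y θ b]
          · rw [hAdef, hQdef]
  -- the two probabilities
  have hpr1 : ∀ S : Finset E, prOf mass (fun ω => R ω t = S) = p S := by
    intro S
    have h0 : prOf mass (fun ω => R ω t = S)
        = ∑ ω, (if R ω t = S then mass ω else 0) := by
      rw [prOf]
      refine Finset.sum_congr rfl fun ω _ => ?_
      congr
    rw [h0]
    calc ∑ ω, (if R ω t = S then mass ω else 0)
        = ∑ ω, mass ω *
            ((fun (a : Ωt t) (b : ∀ s, Ωt s) => if ρ t a b = S then (1:ℝ) else 0)
                (ω.1 t) (ω.2.1 t) * (fun _ => (1:ℝ)) ω) := by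
          refine Finset.sum_congr rfl fun ω _ => ?_
          show _ = mass ω * ((if ρ t (ω.1 t) (ω.2.1 t) = S then (1:ℝ) else 0) * 1)
          rw [← hR2]
          by_cases h : R ω t = S
          · rw [if_pos h, if_pos h]; ring
          · rw [if_neg h, if_neg h]; ring
      _ = (∑ a, ∑ b, (μ t a * m1 b) * (if ρ t a b = S then (1:ℝ) else 0))
            * ∑ ω, mass ω * (1:ℝ) :=
          hstar t (fun a b => if ρ t a b = S then (1:ℝ) else 0) (fun _ => (1:ℝ))
            (fun _ _ _ _ => rfl) (fun _ _ _ _ => rfl)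
      _ = p S := by
          rw [hpdef]
          simp only [mul_one]
          rw [hmass1, mul_one]
  have hpr2 : ∀ S : Finset E,
      prOf mass (fun ω => e ∈ alg ω.2.2 (R ω) t ∧ R ω t = S) = p S * Q S := by
    intro S
    have h0 : prOf mass (fun ω => e ∈ alg ω.2.2 (R ω) t ∧ R ω t = S)
        = ∑ ω, (if e ∈ alg ω.2.2 (R ω) t ∧ R ω t = S then mass ω else 0) := by
      rw [prOf]
      refine Finset.sum_congr rfl fun ω _ => ?_
      congr
    rw [h0]
    have hpt : ∀ ω, (if e ∈ alg ω.2.2 (R ω) t ∧ R ω t = S then mass ω else 0)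
        = mass ω * ((if ρ t (ω.1 t) (ω.2.1 t) = S then (1:ℝ) else 0)
          * (if e ∈ alg ω.2.2 (Function.update (R ω) t S) t then (1:ℝ) else 0)) := by
      intro ω
      by_cases hRS : R ω t = S
      · have hupd : Function.update (R ω) t S = R ω := by
          rw [← hRS, Function.update_eq_self]
        rw [hupd]
        have hρS : ρ t (ω.1 t) (ω.2.1 t) = S := by rw [← hR2, hRS]
        rw [if_pos hρS]
        by_cases halg : e ∈ alg ω.2.2 (R ω) t
        · rw [if_pos ⟨halg, hRS⟩, if_pos halg]; ring
        · rw [if_neg (fun h => halg h.1), if_neg halg]; ring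
      · have hρS : ¬ (ρ t (ω.1 t) (ω.2.1 t) = S) := by rw [← hR2]; exact hRS
        rw [if_neg (fun h => hRS h.2), if_neg hρS]; ring
    calc ∑ ω, (if e ∈ alg ω.2.2 (R ω) t ∧ R ω t = S then mass ω else 0)
        = ∑ ω, mass ω *
            ((fun (a : Ωt t) (b : ∀ s, Ωt s) => if ρ t a b = S then (1:ℝ) else 0)
                (ω.1 t) (ω.2.1 t)
              * (fun ω => if e ∈ alg ω.2.2 (Function.update (R ω) t S) t
                  then (1:ℝ) else 0) ω) :=
          Finset.sum_congr rfl fun ω _ => by rw [hpt ω]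
      _ = p S * Q S := by
          refine (hstar t
            (fun a b => if ρ t a b = S then (1:ℝ) else 0)
            (fun ω => if e ∈ alg ω.2.2 (Function.update (R ω) t S) t then (1:ℝ) else 0)
            ?_ ?_).trans ?_
          · intro x y θ a
            show (if e ∈ alg θ (Function.update (R (Function.update x t a, y, θ)) t S) t
                then (1:ℝ) else 0) = _
            rw [hupd1 S x y θ a]
          · intro x y θ b
            show (if e ∈ alg θ (Function.update (R (x, Function.update y t b, θ)) t S) t
                then (1:ℝ) else 0) = _
            rw [hupd2 S x y θ b]
          · rw [hpdef, hQdef]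
  -- nonnegativity of A
  have hAnn : ∀ S, 0 ≤ A S := by
    intro S
    rw [hAdef]
    refine Finset.sum_nonneg fun a _ => Finset.sum_nonneg fun b _ => ?_
    refine mul_nonneg (mul_nonneg (hμ0 t a) (hm1nn b)) ?_
    by_cases h : e ∈ S ∧ ρ t a b = S
    · rw [if_pos h]
      have heρ : e ∈ ρ t a b := by rw [h.2]; exact h.1
      have h1 : e ∈ OPT (W (Function.update b t a)) := by
        simp only [hρdef] at heρ
        exact (Finset.mem_inter.mp heρ).2
      have h2 := hOPTnn _ e h1
      rwa [hWe _ t e he, Function.update_self] at h2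
    · rw [if_neg h]
  -- per-S inequality
  have hSineq : ∀ S : Finset E, c * A S ≤ A S * Q S := by
    intro S
    rcases eq_or_lt_of_le (hAnn S) with h0 | hpos
    · rw [← h0]; simp
    · have hex : ∃ a, ∃ b, (μ t a * m1 b) *
          (if e ∈ S ∧ ρ t a b = S then wt t a e else 0) ≠ 0 := by
        by_contra hno
        push_neg at hno
        have hz : A S = 0 := by
          rw [hAdef]
          exact Finset.sum_eq_zero fun a _ => Finset.sum_eq_zero fun b _ => hno a b
        linarith
      obtain ⟨a, b, hab⟩ := hex
      have hcond : e ∈ S ∧ ρ t a b = S := by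
        by_contra hc
        rw [if_neg hc, mul_zero] at hab
        exact hab rfl
      have hμm : 0 < μ t a * m1 b := by
        rcases lt_or_eq_of_le (mul_nonneg (hμ0 t a) (hm1nn b)) with h | h
        · exact h
        · exact absurd (by rw [← h, zero_mul]) hab
      have hpS : 0 < p S := by
        have hnn : ∀ (a' : Ωt t) (b' : ∀ s, Ωt s),
            (0:ℝ) ≤ (μ t a' * m1 b') * (if ρ t a' b' = S then (1:ℝ) else 0) := by
          intro a' b'
          refine mul_nonneg (mul_nonneg (hμ0 t a') (hm1nn b')) ?_
          split <;> norm_num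
        have h1 : (μ t a * m1 b) ≤ ∑ b', (μ t a * m1 b') *
            (if ρ t a b' = S then (1:ℝ) else 0) := by
          calc μ t a * m1 b
              = (μ t a * m1 b) * (if ρ t a b = S then (1:ℝ) else 0) := by
                rw [if_pos hcond.2, mul_one]
            _ ≤ ∑ b', (μ t a * m1 b') * (if ρ t a b' = S then (1:ℝ) else 0) :=
                Finset.single_le_sum (fun b' _ => hnn a b') (mem_univ b)
        have h2 : (∑ b', (μ t a * m1 b') * (if ρ t a b' = S then (1:ℝ) else 0)) ≤ p S := by
          rw [hpdef]
          exact Finset.single_le_sum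
            (f := fun a' => ∑ b', (μ t a' * m1 b') * (if ρ t a' b' = S then (1:ℝ) else 0))
            (fun a' _ => Finset.sum_nonneg fun b' _ => hnn a' b') (mem_univ a)
        linarith
      have hQc : c ≤ Q S := by
        have hs := hsel t S (hcond.2 ▸ hρsub t a b) e hcond.1
        rw [hpr1 S, hpr2 S] at hs
        refine le_of_mul_le_mul_right ?_ hpS
        rw [mul_comm (Q S) (p S)]
        exact hs
      calc c * A S ≤ Q S * A S := mul_le_mul_of_nonneg_right hQc (hAnn S)
        _ = A S * Q S := mul_comm _ _
  -- decomposition of the algorithm sum over S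
  have hTL : (∑ ω, mass ω * (if e ∈ alg ω.2.2 (R ω) t then wt t (ω.1 t) e else 0))
      = ∑ S : Finset E, ∑ ω, mass ω *
          (if e ∈ alg ω.2.2 (R ω) t ∧ R ω t = S then wt t (ω.1 t) e else 0) := by
    rw [Finset.sum_comm]
    refine Finset.sum_congr rfl fun ω _ => ?_
    rw [← Finset.mul_sum]
    congr 1
    rw [Finset.sum_eq_single (R ω t)
      (fun S _ hS => if_neg
        (fun hh : e ∈ alg ω.2.2 (R ω) t ∧ R ω t = S => hS hh.2.symm))
      (fun h => absurd (mem_univ _) h)]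
    by_cases h : e ∈ alg ω.2.2 (R ω) t
    · rw [if_pos (show e ∈ alg ω.2.2 (R ω) t ∧ R ω t = R ω t from ⟨h, rfl⟩), if_pos h]
    · rw [if_neg (fun hh : e ∈ alg ω.2.2 (R ω) t ∧ R ω t = R ω t => h hh.1), if_neg h]
  -- identification of the OPT sum
  have hTR : (∑ ω, mass ω * (if e ∈ OPT (W ω.1) then wt t (ω.1 t) e else 0))
      = ∑ S : Finset E, A S := by
    have h1 : (∑ ω, mass ω * (if e ∈ OPT (W ω.1) then wt t (ω.1 t) e else 0))
        = ∑ x, m1 x * (if e ∈ ρ t (x t) x then wt t (x t) e else 0) := by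
      rw [hmarg (fun x => if e ∈ OPT (W x) then wt t (x t) e else 0)]
      refine Finset.sum_congr rfl fun x _ => ?_
      congr 1
      have hself : ρ t (x t) x = B t ∩ OPT (W x) := by
        rw [hρdef]
        show B t ∩ OPT (W (Function.update x t (x t))) = _
        rw [Function.update_eq_self]
      by_cases h : e ∈ OPT (W x)
      · rw [if_pos h, if_pos (by rw [hself]; exact Finset.mem_inter.mpr ⟨he, h⟩)]
      · rw [if_neg h, if_neg (by rw [hself]; exact fun hh => h (Finset.mem_inter.mp hh).2)]
    have h2 : (∑ x, m1 x * (if e ∈ ρ t (x t) x then wt t (x t) e else 0))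
        = ∑ a, μ t a * ∑ b, m1 b * (if e ∈ ρ t a b then wt t a e else 0) :=
      sum_pi_weighted μ t (hμ1 t)
        (fun a x => if e ∈ ρ t a x then wt t a e else 0)
        (fun a x a' => by
          show (if e ∈ ρ t a (Function.update x t a') then wt t a e else 0) = _
          rw [hρinv])
    have h3 : (∑ S : Finset E, A S)
        = ∑ a, μ t a * ∑ b, m1 b * (if e ∈ ρ t a b then wt t a e else 0) := by
      simp only [hAdef]
      rw [Finset.sum_comm]
      refine Finset.sum_congr rfl fun a _ => ?_
      rw [Finset.sum_comm, Finset.mul_sum]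
      refine Finset.sum_congr rfl fun b _ => ?_
      rw [← Finset.mul_sum]
      rw [Finset.sum_eq_single (ρ t a b)
        (fun S _ hS => if_neg (fun hh : e ∈ S ∧ ρ t a b = S => hS hh.2.symm))
        (fun h => absurd (mem_univ _) h)]
      by_cases h : e ∈ ρ t a b
      · rw [if_pos (show e ∈ ρ t a b ∧ ρ t a b = ρ t a b from ⟨h, rfl⟩), if_pos h]; ring
      · rw [if_neg (fun hh : e ∈ ρ t a b ∧ ρ t a b = ρ t a b => h hh.1), if_neg h]; ring
    rw [h1, h2, ← h3]
  -- conclude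
  calc c * (∑ ω, mass ω * (if e ∈ OPT (W ω.1) then wt t (ω.1 t) e else 0))
      = c * ∑ S : Finset E, A S := by rw [hTR]
    _ = ∑ S : Finset E, c * A S := Finset.mul_sum _ _ _
    _ ≤ ∑ S : Finset E, A S * Q S := Finset.sum_le_sum fun S _ => hSineq S
    _ = ∑ S : Finset E, ∑ ω, mass ω *
          (if e ∈ alg ω.2.2 (R ω) t ∧ R ω t = S then wt t (ω.1 t) e else 0) :=
        Finset.sum_congr rfl fun S _ => (hfac S).symm
    _ = ∑ ω, mass ω * (if e ∈ alg ω.2.2 (R ω) t then wt t (ω.1 t) e else 0) := hTL.symm
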